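/- For any positive integer n and real numbers a_1,...,a_n ≥ 1, one has (a_1·a_2···a_n − 1)^n ≥ (a_1^n − 1)(a_2^n − 1)···(a_n^n − 1), with equality if and only if a_1 = a_2 = ... = a_n. -/

import Mathlib

open Finset Real

lemma key_strict (n : ℕ) (hn : 0 < n) (a : Fin n → ℝ) (ha : ∀ i, 1 < a i)
    (hne : ∃ i j, a i ≠ a j) :
    (∏ i, (a i ^ n - 1)) < ((∏ i, a i) - 1) ^ n := by
  have hn' : (n : ℝ) ≠ 0 := Nat.cast_ne_zero.mpr hn.ne'
  have hpow : ∀ i, (1:ℝ) < a i ^ n := fun i => one_lt_pow₀ (ha i) hn.ne'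
  have hpow0 : ∀ i, (0:ℝ) < a i ^ n := fun i => lt_trans one_pos (hpow i)
  set u : Fin n → ℝ := fun i => (a i ^ n - 1) / a i ^ n with hu
  set v : Fin n → ℝ := fun i => (a i ^ n)⁻¹ with hv
  have hu0 : ∀ i, 0 < u i := fun i => div_pos (by linarith [hpow i]) (hpow0 i)
  have hv0 : ∀ i, 0 < v i := fun i => inv_pos.mpr (hpow0 i)
  have huv : ∀ i, u i + v i = 1 := by
    intro i
    have h0 := (hpow0 i).ne'
    rw [hu, hv]
    field_simp
    ring
  have hw : ∑ _i : Fin n, (n:ℝ)⁻¹ = 1 := by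
    simp [Finset.card_univ, mul_comm]
    field_simp
  have hwpos : ∀ i ∈ (univ : Finset (Fin n)), (0:ℝ) < (n:ℝ)⁻¹ := fun i _ =>
    inv_pos.mpr (Nat.cast_pos.mpr hn)
  -- u is non-constant
  have hune : ∃ j ∈ (univ : Finset (Fin n)), ∃ k ∈ (univ : Finset (Fin n)), u j ≠ u k := by
    obtain ⟨i, j, hij⟩ := hne
    refine ⟨i, mem_univ _, j, mem_univ _, ?_⟩
    have hne' : a i ^ n ≠ a j ^ n := fun h =>
      hij ((pow_left_strictMonoOn₀ hn.ne').injOn (by simp; linarith [ha i])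
        (by simp; linarith [ha j]) h)
    simp only [hu]
    intro h
    apply hne'
    have h1 : 1 - (a i ^ n)⁻¹ = 1 - (a j ^ n)⁻¹ := by
      rw [sub_div, div_self (hpow0 i).ne', one_div, sub_div, div_self (hpow0 j).ne', one_div] at h
      exact h
    have h2 : (a i ^ n)⁻¹ = (a j ^ n)⁻¹ := by linarith
    exact inv_injective h2
  set S : ℝ := ∑ i, (n:ℝ)⁻¹ * u i with hS
  set T : ℝ := ∑ i, (n:ℝ)⁻¹ * v i with hT
  have hST : S + T = 1 := by
    rw [hS, hT, ← Finset.sum_add_distrib]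
    calc (∑ i, ((n:ℝ)⁻¹ * u i + (n:ℝ)⁻¹ * v i)) = ∑ _i : Fin n, (n:ℝ)⁻¹ := by
          refine Finset.sum_congr rfl fun i _ => ?_
          rw [← mul_add, huv i, mul_one]
      _ = 1 := hw
  have hSpos : 0 < S := Finset.sum_pos (fun i _ => mul_pos (hwpos i (mem_univ i)) (hu0 i)) ⟨⟨0, hn⟩, mem_univ _⟩
  have hTpos : 0 < T := Finset.sum_pos (fun i _ => mul_pos (hwpos i (mem_univ i)) (hv0 i)) ⟨⟨0, hn⟩, mem_univ _⟩
  -- strict Jensen for u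
  have hJu : ∑ i, (n:ℝ)⁻¹ • Real.log (u i) < Real.log S := by
    have := strictConcaveOn_log_Ioi.lt_map_sum (t := univ) (w := fun _ => (n:ℝ)⁻¹)
      (p := u) hwpos hw (fun i _ => hu0 i) hune
    simpa [smul_eq_mul, hS] using this
  have hJv : ∑ i, (n:ℝ)⁻¹ • Real.log (v i) ≤ Real.log T := by
    have := strictConcaveOn_log_Ioi.concaveOn.le_map_sum (t := univ) (w := fun _ => (n:ℝ)⁻¹)
      (p := v) (fun i _ => (hwpos i (mem_univ i)).le) hw (fun i _ => hv0 i)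
    simpa [smul_eq_mul, hT] using this
  -- convert to products
  have hlogU : ∑ i, (n:ℝ)⁻¹ • Real.log (u i) = (n:ℝ)⁻¹ * Real.log (∏ i, u i) := by
    rw [Real.log_prod (fun i _ => (hu0 i).ne'), Finset.mul_sum]
    simp [smul_eq_mul]
  have hlogV : ∑ i, (n:ℝ)⁻¹ • Real.log (v i) = (n:ℝ)⁻¹ * Real.log (∏ i, v i) := by
    rw [Real.log_prod (fun i _ => (hv0 i).ne'), Finset.mul_sum]
    simp [smul_eq_mul]
  have hU0 : 0 < ∏ i, u i := Finset.prod_pos fun i _ => hu0 i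
  have hV0 : 0 < ∏ i, v i := Finset.prod_pos fun i _ => hv0 i
  have hUlt : (∏ i, u i) < S ^ n := by
    rw [← Real.log_lt_log_iff hU0 (pow_pos hSpos n), Real.log_pow]
    have := hJu; rw [hlogU] at this
    calc Real.log (∏ i, u i) = (n:ℝ) * ((n:ℝ)⁻¹ * Real.log (∏ i, u i)) := by field_simp
      _ < (n:ℝ) * Real.log S := by
          exact (mul_lt_mul_iff_right₀ (Nat.cast_pos.mpr hn)).mpr this
  have hVle : (∏ i, v i) ≤ T ^ n := by
    rw [← Real.log_le_log_iff hV0 (pow_pos hTpos n), Real.log_pow]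
    have := hJv; rw [hlogV] at this
    calc Real.log (∏ i, v i) = (n:ℝ) * ((n:ℝ)⁻¹ * Real.log (∏ i, v i)) := by field_simp
      _ ≤ (n:ℝ) * Real.log T := by
          exact (mul_le_mul_iff_right₀ (Nat.cast_pos.mpr hn)).mpr this
  set P : ℝ := ∏ i, a i with hP
  have hP1 : 1 < P := by
    have : Nonempty (Fin n) := ⟨⟨0, hn⟩⟩
    calc (1:ℝ) = ∏ _i : Fin n, 1 := by simp
      _ < P := Finset.prod_lt_prod_of_nonempty (by simp) (fun i _ => ha i) univ_nonempty
  have hP0 : 0 < P := lt_trans one_pos hP1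
  have hprodan : ∏ i, a i ^ n = P ^ n := by rw [hP, ← Finset.prod_pow]
  have hVeq : ∏ i, v i = (P⁻¹) ^ n := by
    have h1 : ∏ i, v i = (∏ i, a i ^ n)⁻¹ := by rw [hv]; exact Finset.prod_inv_distrib _
    rw [h1, hprodan, ← inv_pow]
  have hTge : P⁻¹ ≤ T := by
    have : (P⁻¹) ^ n ≤ T ^ n := hVeq ▸ hVle
    exact le_of_pow_le_pow_left₀ hn.ne' hTpos.le this
  have hSle : S ≤ 1 - P⁻¹ := by linarith
  have hUeq : ∏ i, (a i ^ n - 1) = (∏ i, u i) * P ^ n := by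
    rw [← hprodan, ← Finset.prod_mul_distrib]
    refine Finset.prod_congr rfl fun i _ => ?_
    rw [hu]; exact (div_mul_cancel₀ _ (hpow0 i).ne').symm
  rw [hUeq]
  have h1 : (∏ i, u i) * P ^ n < S ^ n * P ^ n :=
    (mul_lt_mul_iff_left₀ (pow_pos hP0 n)).mpr hUlt
  have h2 : S ^ n * P ^ n ≤ (1 - P⁻¹) ^ n * P ^ n :=
    mul_le_mul_of_nonneg_right (pow_le_pow_left₀ hSpos.le hSle n) (pow_pos hP0 n).le
  have h3 : (1 - P⁻¹) ^ n * P ^ n = (P - 1) ^ n := by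
    rw [← mul_pow, sub_mul, one_mul, inv_mul_cancel₀ hP0.ne']
  linarith

/-- For any positive integer `n` and real numbers `a 1, …, a n ≥ 1`,
`(a 1 ⋯ a n − 1)^n ≥ (a 1^n − 1) ⋯ (a n^n − 1)`, with equality iff all `a i` are equal. -/
theorem prod_pow_sub_one_ineq (n : ℕ) (hn : 0 < n) (a : Fin n → ℝ)
    (ha : ∀ i, 1 ≤ a i) :
    (∏ i, (a i ^ n - 1)) ≤ ((∏ i, a i) - 1) ^ n ∧
      (((∏ i, a i) - 1) ^ n = ∏ i, (a i ^ n - 1) ↔ ∀ i j, a i = a j) := by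
  by_cases hall : ∀ i j, a i = a j
  · set i0 : Fin n := ⟨0, hn⟩
    have heq : ∏ i, a i = a i0 ^ n := by
      calc ∏ i, a i = ∏ _i : Fin n, a i0 := Finset.prod_congr rfl fun i _ => hall i i0
        _ = a i0 ^ n := by simp [Finset.prod_const, Finset.card_univ]
    have heq2 : ∏ i, (a i ^ n - 1) = (a i0 ^ n - 1) ^ n := by
      calc ∏ i, (a i ^ n - 1) = ∏ _i : Fin n, (a i0 ^ n - 1) :=
            Finset.prod_congr rfl fun i _ => by rw [hall i i0]
        _ = (a i0 ^ n - 1) ^ n := by simp [Finset.prod_const, Finset.card_univ]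
    refine ⟨le_of_eq ?_, ⟨fun _ => hall, fun _ => ?_⟩⟩ <;> rw [heq, heq2]
  · have hlt : (∏ i, (a i ^ n - 1)) < ((∏ i, a i) - 1) ^ n := by
      by_cases h1 : ∃ i, a i = 1
      · obtain ⟨i, hi⟩ := h1
        have hz : ∏ i, (a i ^ n - 1) = 0 :=
          Finset.prod_eq_zero (Finset.mem_univ i) (by rw [hi]; simp)
        rw [hz]
        have hex : ∃ j, 1 < a j := by
          by_contra hc
          push_neg at hc
          exact hall fun j k => by
            have := le_antisymm (hc j) (ha j); have := le_antisymm (hc k) (ha k)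
            simp_all
        obtain ⟨j, hj⟩ := hex
        have hP : 1 < ∏ i, a i := by
          calc (1:ℝ) = ∏ _i : Fin n, 1 := by simp
            _ < ∏ i, a i := Finset.prod_lt_prod (by simp) (fun i _ => ha i)
                ⟨j, Finset.mem_univ j, hj⟩
        exact pow_pos (by linarith) n
      · push_neg at h1
        push_neg at hall
        exact key_strict n hn a (fun i => lt_of_le_of_ne (ha i) (Ne.symm (h1 i))) hall
    exact ⟨hlt.le, ⟨fun h => (hlt.ne' h).elim, fun h => absurd h hall⟩⟩
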